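/- Binomial-coefficient formula for truncated Bernoulli–Carlitz numbers: for every integer N ≥ 0 and every n ≥ 1, BC_{N,n} = Π(n) Σ_{k=1}^{n} (n+1 choose k+1) (−D_N)^k Σ_{i_1,…,i_k ≥ 0, r^{N+i_1}+⋯+r^{N+i_k} = n + k r^N} 1/(D_{N+i_1} ⋯ D_{N+i_k}), where the inner sum is over all ordered k-tuples of nonnegative integers (i_1,…,i_k) with r^{N+i_1}+⋯+r^{N+i_k} = n + k r^N. -/

import Mathlib

/-!
Carlitz module: `Fq` is a finite field with `r = Fintype.card Fq` elements (so `r` is a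
power of a prime `p`), and `K = Fq(T)` is the field of rational functions over `Fq`.
-/

noncomputable section

variable (Fq : Type*) [Field Fq] [Fintype Fq]

/-- `r`, the number of elements of the finite field `Fq` (a prime power). -/
def rq : ℕ := Fintype.card Fq

/-- `[i] = T^{r^i} − T` in `K = Fq(T)`. -/
def carlitzBracket (i : ℕ) : RatFunc Fq := RatFunc.X ^ rq Fq ^ i - RatFunc.X

/-- `D_0 = 1`, `D_i = [i]·D_{i−1}^r`. -/
def carlitzD : ℕ → RatFunc Fq
  | 0 => 1
  | i + 1 => carlitzBracket Fq (i + 1) * carlitzD i ^ rq Fq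

/-- `L_0 = 1`, `L_i = [i]·L_{i−1}`. -/
def carlitzL : ℕ → RatFunc Fq
  | 0 => 1
  | i + 1 => carlitzBracket Fq (i + 1) * carlitzL i

/-- The Carlitz factorial `Π(i) = ∏_j D_j^{c_j}`, where `i = Σ_j c_j r^j` with
`0 ≤ c_j < r` is the base-`r` expansion of `i`. -/
def carlitzPi (i : ℕ) : RatFunc Fq :=
  ∏ j ∈ Finset.range (i + 1), carlitzD Fq j ^ (Nat.digits (rq Fq) i).getD j 0

/-- The power series `Σ_{j=0}^∞ (D_N/D_{N+j}) x^{r^{N+j} − r^N}`, i.e.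
`(e_C(x) − Σ_{i=0}^{N−1} x^{r^i}/D_i)·D_N/x^{r^N}`; it has constant term `1`. -/
def bcSeries (N : ℕ) : PowerSeries (RatFunc Fq) :=
  PowerSeries.mk fun m => ∑ j ∈ Finset.range (m + 1),
    if m = rq Fq ^ (N + j) - rq Fq ^ N then carlitzD Fq N / carlitzD Fq (N + j) else 0

/-- The truncated Bernoulli–Carlitz number `BC_{N,n}`: `BC_{N,n}/Π(n)` is the `n`-th
coefficient of the multiplicative inverse of the power series
`Σ_{j=0}^∞ (D_N/D_{N+j}) x^{r^{N+j} − r^N}`. -/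
def truncBC (N n : ℕ) : RatFunc Fq :=
  carlitzPi Fq n * PowerSeries.coeff n (bcSeries Fq N)⁻¹

/-- The power series `Σ_{j=0}^∞ (−1)^j (L_N/L_{N+j}) x^{r^{N+j} − r^N}`, i.e.
`(log_C(x) − Σ_{i=0}^{N−1} (−1)^i x^{r^i}/L_i)·(−1)^N L_N/x^{r^N}`;
it has constant term `1`. -/
def ccSeries (N : ℕ) : PowerSeries (RatFunc Fq) :=
  PowerSeries.mk fun m => ∑ j ∈ Finset.range (m + 1),
    if m = rq Fq ^ (N + j) - rq Fq ^ N then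
      (-1) ^ j * carlitzL Fq N / carlitzL Fq (N + j) else 0

/-- The truncated Cauchy–Carlitz number `CC_{N,n}`: `CC_{N,n}/Π(n)` is the `n`-th
coefficient of the multiplicative inverse of the power series
`Σ_{j=0}^∞ (−1)^j (L_N/L_{N+j}) x^{r^{N+j} − r^N}`. -/
def truncCC (N n : ℕ) : RatFunc Fq :=
  carlitzPi Fq n * PowerSeries.coeff n (ccSeries Fq N)⁻¹

/-- The tail `e_C(z) − 𝓔_{N−1}(z) = Σ_{i=N}^∞ z^{r^i}/D_i` of the Carlitz exponential. -/
def carlitzExpTail (N : ℕ) : PowerSeries (RatFunc Fq) :=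
  PowerSeries.mk fun m => ∑ j ∈ Finset.range (m + 1),
    if m = rq Fq ^ (N + j) then (carlitzD Fq (N + j))⁻¹ else 0

/-- The associated Stirling–Carlitz number of the second kind `{n brace k}_{C,≥N}`,
defined by `(e_C(z) − 𝓔_{N−1}(z))^k/Π(k) = Σ_n {n brace k}_{C,≥N} z^n/Π(n)`. -/
def stirling2C (N k n : ℕ) : RatFunc Fq :=
  carlitzPi Fq n / carlitzPi Fq k * PowerSeries.coeff n (carlitzExpTail Fq N ^ k)

/-- The tail `log_C(z) − 𝓕_{N−1}(z) = Σ_{i=N}^∞ (−1)^i z^{r^i}/L_i` of the Carlitz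
logarithm. -/
def carlitzLogTail (N : ℕ) : PowerSeries (RatFunc Fq) :=
  PowerSeries.mk fun m => ∑ j ∈ Finset.range (m + 1),
    if m = rq Fq ^ (N + j) then (-1) ^ (N + j) * (carlitzL Fq (N + j))⁻¹ else 0

/-- The associated Stirling–Carlitz number of the first kind `{n brack k}_{C,≥N}`,
defined by `(log_C(z) − 𝓕_{N−1}(z))^k/Π(k) = Σ_n {n brack k}_{C,≥N} z^n/Π(n)`. -/
def stirling1C (N k n : ℕ) : RatFunc Fq :=
  carlitzPi Fq n / carlitzPi Fq k * PowerSeries.coeff n (carlitzLogTail Fq N ^ k)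


open Finset PowerSeries

lemma int_binom_id : ∀ d n m : ℕ, m + d = n →
    ∑ k ∈ Icc m n, ((-1 : ℤ)^k * ((n+1).choose (k+1)) * (k.choose m)) = (-1)^m := by
  intro d
  induction d with
  | zero =>
    rintro n m rfl
    simp
  | succ d ih =>
    rintro n m rfl
    have hmn : m < m + (d+1) := by omega
    -- Pascal: cast C(k,m) = C(k+1,m+1) - C(k,m+1)
    have hpas : ∀ k : ℕ, ((k.choose m : ℤ)) = ((k+1).choose (m+1) : ℤ) - (k.choose (m+1) : ℤ) := by
      intro k
      have := Nat.choose_succ_succ k m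
      push_cast [this]
      ring
    have hsplit : ∑ k ∈ Icc m (m + (d+1)), ((-1 : ℤ)^k * ((m + (d+1) + 1).choose (k+1)) * (k.choose m))
        = (∑ k ∈ Icc m (m + (d+1)), ((-1 : ℤ)^k * ((m + (d+1) + 1).choose (k+1)) * ((k+1).choose (m+1))))
          - ∑ k ∈ Icc m (m + (d+1)), ((-1 : ℤ)^k * ((m + (d+1) + 1).choose (k+1)) * (k.choose (m+1))) := by
      rw [← Finset.sum_sub_distrib]
      refine Finset.sum_congr rfl fun k _ => ?_
      rw [hpas k]; ring
    have hT : ∑ k ∈ Icc m (m + (d+1)), ((-1 : ℤ)^k * ((m + (d+1) + 1).choose (k+1)) * ((k+1).choose (m+1))) = 0 := by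
      have hterm : ∀ k ∈ Icc m (m + (d+1)),
          ((-1 : ℤ)^k * ((m + (d+1) + 1).choose (k+1)) * ((k+1).choose (m+1)))
            = ((m + (d+1) + 1).choose (m+1) : ℤ) * ((-1)^k * ((d+1).choose (k-m))) := by
        intro k hk
        rw [mem_Icc] at hk
        have h1 : ((m + (d+1) + 1).choose (k+1)) * ((k+1).choose (m+1))
            = ((m + (d+1) + 1).choose (m+1)) * ((m + (d+1) + 1 - (m+1)).choose (k+1-(m+1))) :=
          Nat.choose_mul (by omega)
        have h2 : m + (d+1) + 1 - (m+1) = d + 1 := by omega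
        have h3 : k + 1 - (m+1) = k - m := by omega
        rw [h2, h3] at h1
        have h1' : ((m + (d + 1) + 1).choose (k+1) : ℤ) * ((k+1).choose (m+1) : ℤ)
            = ((m + (d + 1) + 1).choose (m+1) : ℤ) * ((d+1).choose (k-m) : ℤ) := by
          exact_mod_cast congrArg (Nat.cast : ℕ → ℤ) h1
        linear_combination ((-1:ℤ)^k) * h1'
      rw [Finset.sum_congr rfl hterm, ← Finset.mul_sum]
      have : ∑ k ∈ Icc m (m + (d+1)), ((-1 : ℤ)^k * ((d+1).choose (k-m)))
          = (-1)^m * ∑ j ∈ range (d+2), ((-1 : ℤ)^j * ((d+1).choose j)) := by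
        rw [← Finset.Ico_add_one_right_eq_Icc, Finset.sum_Ico_eq_sum_range]
        have h4 : m + (d+1) + 1 - m = d + 2 := by omega
        rw [h4, Finset.mul_sum]
        refine Finset.sum_congr rfl fun j _ => ?_
        have : m + j - m = j := by omega
        rw [this, pow_add]
        ring
      rw [this, Int.alternating_sum_range_choose_of_ne (by omega)]
      ring
    have hU : ∑ k ∈ Icc m (m + (d+1)), ((-1 : ℤ)^k * ((m + (d+1) + 1).choose (k+1)) * (k.choose (m+1)))
        = (-1)^(m+1) := by
      have hins : Icc m (m + (d+1)) = insert m (Icc (m+1) (m + (d+1))) := by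
        ext x; simp only [mem_Icc, mem_insert]; omega
      rw [hins, Finset.sum_insert (by simp only [mem_Icc]; omega)]
      have hz : (m.choose (m+1) : ℤ) = 0 := by
        rw [Nat.choose_eq_zero_of_lt (by omega)]; simp
      rw [hz, mul_zero]
      have := ih (m + (d+1)) (m+1) (by omega)
      rw [this]
      ring
    rw [hsplit, hT, hU]
    ring


lemma field_binom_id (F : Type*) [Field F] (n m : ℕ) (h1 : 1 ≤ m) (h2 : m ≤ n) :
    ∑ k ∈ Icc 1 n, ((-1 : F)^k * ((n+1).choose (k+1)) * (k.choose m)) = (-1)^m := by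
  have hsub : ∑ k ∈ Icc m n, ((-1 : F)^k * ((n+1).choose (k+1)) * (k.choose m))
      = ∑ k ∈ Icc 1 n, ((-1 : F)^k * ((n+1).choose (k+1)) * (k.choose m)) := by
    refine Finset.sum_subset (fun x hx => ?_) (fun x hx hnx => ?_)
    · rw [mem_Icc] at hx ⊢; omega
    · rw [mem_Icc] at hx hnx
      rw [Nat.choose_eq_zero_of_lt (show x < m by omega)]
      push_cast; ring
  rw [← hsub]
  have h := int_binom_id (n - m) n m (by omega)
  have := congrArg (Int.cast : ℤ → F) h
  push_cast at this
  exact this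

lemma coeff_inv_eq (F : Type*) [Field F] (f : PowerSeries F)
    (hf : constantCoeff f = 1) (n : ℕ) (hn : 1 ≤ n) :
    coeff n f⁻¹ = ∑ k ∈ Icc 1 n, (-1 : F)^k * ((n+1).choose (k+1)) * coeff n (f^k) := by
  obtain ⟨g, rfl⟩ : ∃ g, f = 1 + g := ⟨f - 1, by ring⟩
  have hg0 : constantCoeff g = 0 := by
    have := hf; rw [map_add, map_one] at this; linear_combination this
  have hXg : (X : PowerSeries F) ∣ g := X_dvd_iff.2 hg0
  have hfne : constantCoeff (1 + g) ≠ 0 := by rw [hf]; exact one_ne_zero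
  set S : PowerSeries F := ∑ k ∈ range (n+1), (-g)^k with hS
  have hSf : S * (1 + g) = 1 - (-g)^(n+1) := by
    have h := geom_sum_mul (-g) (n+1)
    rw [hS]
    linear_combination -h
  have hpow : (X : PowerSeries F)^(n+1) ∣ (-g)^(n+1) :=
    pow_dvd_pow_of_dvd ((dvd_neg).2 hXg) (n+1)
  have hinv : (1 + g) * (1 + g)⁻¹ = 1 := PowerSeries.mul_inv_cancel _ hfne
  have hkey : coeff n (1 + g)⁻¹ = coeff n S := by
    have hrw : S = (1 + g)⁻¹ - (-g)^(n+1) * (1 + g)⁻¹ := by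
      calc S = S * ((1 + g) * (1 + g)⁻¹) := by rw [hinv, mul_one]
        _ = (S * (1 + g)) * (1 + g)⁻¹ := by ring
        _ = (1 - (-g)^(n+1)) * (1 + g)⁻¹ := by rw [hSf]
        _ = (1 + g)⁻¹ - (-g)^(n+1) * (1 + g)⁻¹ := by ring
    have hz : coeff n ((-g)^(n+1) * (1 + g)⁻¹) = 0 := by
      have hdvd : (X : PowerSeries F)^(n+1) ∣ (-g)^(n+1) * (1 + g)⁻¹ :=
        hpow.mul_right _
      exact (X_pow_dvd_iff.1 hdvd) n (by omega)
    rw [hrw, map_sub, hz, sub_zero]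
  have hScoeff : coeff n S = ∑ k ∈ range (n+1), (-1 : F)^k * coeff n (g^k) := by
    rw [hS, map_sum]
    refine Finset.sum_congr rfl fun k _ => ?_
    have : (-g)^k = ((-1 : F)^k) • (g^k) := by
      rw [← smul_pow, neg_one_smul]
    rw [this, coeff_smul, smul_eq_mul]
  have hfk : ∀ k, coeff n ((1 + g)^k)
      = ∑ m ∈ range (k+1), (k.choose m : F) * coeff n (g^m) := by
    intro k
    rw [add_comm (1 : PowerSeries F) g, add_pow, map_sum]
    refine Finset.sum_congr rfl fun m _ => ?_
    rw [one_pow, mul_one]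
    have : ((k.choose m : ℕ) : PowerSeries F) = C ((k.choose m : F)) := by
      rw [map_natCast C]
    rw [this, mul_comm, coeff_C_mul]
  rw [hkey, hScoeff]
  -- now transform RHS
  have hcoeff1 : coeff n ((1:PowerSeries F)) = 0 := by
    rw [coeff_one, if_neg (by omega)]
  calc ∑ k ∈ range (n+1), (-1 : F)^k * coeff n (g^k)
      = ∑ m ∈ range (n+1), (∑ k ∈ Icc 1 n, (-1 : F)^k * ((n+1).choose (k+1)) * (k.choose m)) * coeff n (g^m) := by
        refine Finset.sum_congr rfl fun m hm => ?_
        rw [mem_range] at hm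
        rcases Nat.eq_zero_or_pos m with hm0 | hm1
        · subst hm0
          simp only [pow_zero, hcoeff1, mul_zero, one_mul]
        · rw [field_binom_id F n m hm1 (by omega)]
    _ = ∑ m ∈ range (n+1), ∑ k ∈ Icc 1 n, (-1 : F)^k * ((n+1).choose (k+1)) * ((k.choose m) * coeff n (g^m)) := by
        refine Finset.sum_congr rfl fun m _ => ?_
        rw [Finset.sum_mul]
        refine Finset.sum_congr rfl fun k _ => ?_
        ring
    _ = ∑ k ∈ Icc 1 n, ∑ m ∈ range (n+1), (-1 : F)^k * ((n+1).choose (k+1)) * ((k.choose m) * coeff n (g^m)) :=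
        Finset.sum_comm
    _ = ∑ k ∈ Icc 1 n, (-1 : F)^k * ((n+1).choose (k+1)) * coeff n ((1+g)^k) := by
        refine Finset.sum_congr rfl fun k hk => ?_
        rw [mem_Icc] at hk
        rw [hfk k, Finset.mul_sum]
        refine (Finset.sum_subset (fun x hx => ?_) (fun x hx hnx => ?_)).symm
        · rw [mem_range] at hx ⊢; omega
        · rw [mem_range] at hx hnx
          rw [Nat.choose_eq_zero_of_lt (show k < x by omega)]
          push_cast; ring

lemma one_lt_rq : 1 < rq Fq := Fintype.one_lt_card

lemma carlitzBracket_ne_zero (i : ℕ) (hi : 1 ≤ i) : carlitzBracket Fq i ≠ 0 := by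
  intro h
  rw [carlitzBracket, sub_eq_zero] at h
  have hX : (RatFunc.X : RatFunc Fq) = algebraMap (Polynomial Fq) (RatFunc Fq) Polynomial.X :=
    RatFunc.algebraMap_X.symm
  rw [hX, ← map_pow] at h
  have hpoly : (Polynomial.X : Polynomial Fq) ^ rq Fq ^ i = Polynomial.X :=
    IsFractionRing.injective (Polynomial Fq) (RatFunc Fq) h
  have hdeg := congrArg Polynomial.natDegree hpoly
  rw [Polynomial.natDegree_X_pow, Polynomial.natDegree_X] at hdeg
  have h2 : 2 ≤ rq Fq ^ i := by
    calc 2 = 2 ^ 1 := rfl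
    _ ≤ 2 ^ i := Nat.pow_le_pow_right (by omega) hi
    _ ≤ rq Fq ^ i := Nat.pow_le_pow_left (one_lt_rq Fq) i
  omega

lemma carlitzD_ne_zero (i : ℕ) : carlitzD Fq i ≠ 0 := by
  induction i with
  | zero => simp [carlitzD]
  | succ i ih =>
    rw [carlitzD]
    exact mul_ne_zero (carlitzBracket_ne_zero Fq (i+1) (by omega)) (pow_ne_zero _ ih)

/-- exponent function -/
def eN (Fq : Type*) [Field Fq] [Fintype Fq] (N j : ℕ) : ℕ := rq Fq ^ (N + j) - rq Fq ^ N

lemma rq_pow_le (N j : ℕ) : rq Fq ^ N ≤ rq Fq ^ (N + j) :=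
  Nat.pow_le_pow_right (le_of_lt (one_lt_rq Fq)) (Nat.le_add_right _ _)

lemma eN_add (N j : ℕ) : rq Fq ^ (N + j) = eN Fq N j + rq Fq ^ N :=
  (Nat.sub_add_cancel (rq_pow_le Fq N j)).symm

lemma eN_strictMono (N : ℕ) : StrictMono (eN Fq N) := by
  intro a b hab
  have := Nat.pow_lt_pow_right (one_lt_rq Fq) (show N + a < N + b by omega)
  exact Nat.sub_lt_sub_right (rq_pow_le Fq N a) this

lemma le_eN (N j : ℕ) : j ≤ eN Fq N j := by
  have h1 : rq Fq ^ (N + j) = rq Fq ^ N * rq Fq ^ j := pow_add _ _ _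
  have h2 : j + 1 ≤ rq Fq ^ j := by
    calc j + 1 ≤ 2 ^ j := Nat.succ_le_of_lt (Nat.lt_two_pow_self)
    _ ≤ rq Fq ^ j := Nat.pow_le_pow_left (one_lt_rq Fq) j
  have h3 : 1 ≤ rq Fq ^ N := Nat.one_le_pow _ _ (by have := one_lt_rq Fq; omega)
  have h4 : rq Fq ^ N * (j + 1) ≤ rq Fq ^ N * rq Fq ^ j := Nat.mul_le_mul_left _ h2
  have h5 : j ≤ rq Fq ^ N * j := Nat.le_mul_of_pos_left j (by omega)
  have h6 : rq Fq ^ N * (j + 1) = rq Fq ^ N * j + rq Fq ^ N := by ring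
  rw [eN]
  omega

lemma coeff_bc_e (N j : ℕ) :
    PowerSeries.coeff (eN Fq N j) (bcSeries Fq N)
      = carlitzD Fq N / carlitzD Fq (N + j) := by
  rw [bcSeries, PowerSeries.coeff_mk]
  rw [Finset.sum_eq_single j]
  · rw [if_pos (show eN Fq N j = rq Fq ^ (N + j) - rq Fq ^ N from rfl)]
  · intro b _ hb
    rw [if_neg]
    intro h
    exact hb ((eN_strictMono Fq N).injective h.symm)
  · intro hj
    exact absurd (Finset.mem_range.2 (by have := le_eN Fq N j; omega)) hj

lemma coeff_bc_ne (N m : ℕ) (h : ∀ j, m ≠ eN Fq N j) :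
    PowerSeries.coeff m (bcSeries Fq N) = 0 := by
  rw [bcSeries, PowerSeries.coeff_mk]
  exact Finset.sum_eq_zero fun j _ => if_neg (h j)

lemma constantCoeff_bc (N : ℕ) :
    PowerSeries.constantCoeff (bcSeries Fq N) = 1 := by
  have h0 : eN Fq N 0 = 0 := by simp [eN]
  have := coeff_bc_e Fq N 0
  rw [h0] at this
  rw [← PowerSeries.coeff_zero_eq_constantCoeff_apply, this, Nat.add_zero,
    div_self (carlitzD_ne_zero Fq N)]

/-- inverse of the exponent function -/
def einv (Fq : Type*) [Field Fq] [Fintype Fq] (N m : ℕ) : ℕ :=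
  Classical.epsilon (fun j => m = eN Fq N j)

lemma einv_spec (N m : ℕ) (h : ∃ j, m = eN Fq N j) : eN Fq N (einv Fq N m) = m :=
  (Classical.epsilon_spec h).symm

lemma einv_e (N j : ℕ) : einv Fq N (eN Fq N j) = j := by
  have h : ∃ j', eN Fq N j = eN Fq N j' := ⟨j, rfl⟩
  exact (eN_strictMono Fq N).injective (einv_spec Fq N _ h)

set_option maxHeartbeats 2000000 in
lemma tuple_sum (N n k : ℕ) :
    (∑ᶠ (i : Fin k → ℕ) (_ : ∑ j, rq Fq ^ (N + i j) = n + k * rq Fq ^ N),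
        ∏ j, (carlitzD Fq (N + i j))⁻¹)
      = ((carlitzD Fq N)⁻¹)^k * PowerSeries.coeff n ((bcSeries Fq N)^k) := by
  classical
  have hcond : ∀ i : Fin k → ℕ,
      (∑ j, rq Fq ^ (N + i j) = n + k * rq Fq ^ N) ↔ (∑ j, eN Fq N (i j) = n) := by
    intro i
    have h1 : ∑ j, rq Fq ^ (N + i j) = (∑ j, eN Fq N (i j)) + k * rq Fq ^ N := by
      rw [Finset.sum_congr rfl (fun j _ => eN_add Fq N (i j)), Finset.sum_add_distrib,
        Finset.sum_const, Finset.card_univ, Fintype.card_fin, smul_eq_mul]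
    omega
  set T : Finset (Fin k → ℕ) :=
    (Fintype.piFinset fun _ : Fin k => Finset.range (n+1)).filter
      (fun i => ∑ j, eN Fq N (i j) = n) with hT
  have hfin : (∑ᶠ (i : Fin k → ℕ) (_ : ∑ j, rq Fq ^ (N + i j) = n + k * rq Fq ^ N),
        ∏ j, (carlitzD Fq (N + i j))⁻¹) = ∑ i ∈ T, ∏ j, (carlitzD Fq (N + i j))⁻¹ := by
    refine finsum_cond_eq_sum_of_cond_iff _ ?_
    intro x hx
    rw [hT, Finset.mem_filter, Fintype.mem_piFinset]
    constructor
    · intro hP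
      have hP' := (hcond x).1 hP
      refine ⟨fun j => Finset.mem_range.2 ?_, hP'⟩
      have h1 : eN Fq N (x j) ≤ n :=
        hP' ▸ Finset.single_le_sum (f := fun j => eN Fq N (x j))
          (fun _ _ => Nat.zero_le _) (Finset.mem_univ j)
      have := le_eN Fq N (x j)
      omega
    · rintro ⟨_, hs⟩
      exact (hcond x).2 hs
  -- the finsupp encoding of a tuple
  set L : (Fin k → ℕ) → (ℕ →₀ ℕ) := fun i =>
    Finsupp.onFinset (Finset.range k) (fun t => if h : t < k then eN Fq N (i ⟨t, h⟩) else 0)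
      (fun t ht => by
        rw [Finset.mem_range]
        by_contra hlt
        exact ht (dif_neg hlt)) with hL
  have hLval : ∀ (i : Fin k → ℕ) (j : Fin k), (L i) (j : ℕ) = eN Fq N (i j) := by
    intro i j
    rw [hL]
    simp only [Finsupp.onFinset_apply]
    rw [dif_pos j.isLt]
  have hLzero : ∀ (i : Fin k → ℕ) (t : ℕ), ¬ t < k → (L i) t = 0 := by
    intro i t ht
    rw [hL]
    simp only [Finsupp.onFinset_apply]
    rw [dif_neg ht]
  have hsumL : ∀ i : Fin k → ℕ, ∑ t ∈ Finset.range k, (L i) t = ∑ j : Fin k, eN Fq N (i j) := by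
    intro i
    rw [Finset.sum_range (fun t => (L i) t)]
    exact Finset.sum_congr rfl fun j _ => hLval i j
  have hstep1 : ∑ l ∈ Finset.finsuppAntidiag (Finset.range k) n,
        ∏ t ∈ Finset.range k, PowerSeries.coeff (l t) (bcSeries Fq N)
      = ∑ l ∈ (Finset.finsuppAntidiag (Finset.range k) n).filter
          (fun l => ∀ t ∈ Finset.range k, ∃ j, l t = eN Fq N j),
          ∏ t ∈ Finset.range k, PowerSeries.coeff (l t) (bcSeries Fq N) := by
    refine (Finset.sum_filter_of_ne ?_).symm
    intro l hl hne t ht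
    by_contra hnex
    push_neg at hnex
    exact hne (Finset.prod_eq_zero ht (coeff_bc_ne Fq N (l t) hnex))
  have hbij : ∑ l ∈ (Finset.finsuppAntidiag (Finset.range k) n).filter
          (fun l => ∀ t ∈ Finset.range k, ∃ j, l t = eN Fq N j),
          ∏ t ∈ Finset.range k, PowerSeries.coeff (l t) (bcSeries Fq N)
      = ∑ i ∈ T, ∏ j : Fin k, (carlitzD Fq N / carlitzD Fq (N + i j)) := by
    refine Finset.sum_nbij' (i := fun l (j : Fin k) => einv Fq N (l (j : ℕ)))
      (j := L) ?_ ?_ ?_ ?_ ?_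
    · -- forward membership
      intro l hl
      rw [Finset.mem_filter] at hl
      obtain ⟨hl1, hl2⟩ := hl
      rw [Finset.mem_finsuppAntidiag] at hl1
      obtain ⟨hsum, _⟩ := hl1
      have hle : ∀ j : Fin k, eN Fq N (einv Fq N (l (j : ℕ))) = l (j : ℕ) :=
        fun j => einv_spec Fq N _ (hl2 (j : ℕ) (Finset.mem_range.2 j.isLt))
      have hsum2 : ∑ j : Fin k, eN Fq N (einv Fq N (l (j : ℕ))) = n := by
        rw [Finset.sum_congr rfl (fun j _ => hle j), ← Finset.sum_range (fun t => l t)]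
        exact hsum
      rw [hT, Finset.mem_filter, Fintype.mem_piFinset]
      refine ⟨fun j => Finset.mem_range.2 ?_, hsum2⟩
      have h1 : eN Fq N (einv Fq N (l (j : ℕ))) ≤ n :=
        hsum2 ▸ Finset.single_le_sum (f := fun j : Fin k => eN Fq N (einv Fq N (l (j : ℕ))))
          (fun _ _ => Nat.zero_le _) (Finset.mem_univ j)
      have h2 := le_eN Fq N (einv Fq N (l (j : ℕ)))
      show einv Fq N (l (j : ℕ)) < n + 1
      omega
    · -- backward membership
      intro i hi
      rw [hT, Finset.mem_filter, Fintype.mem_piFinset] at hi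
      obtain ⟨_, hs⟩ := hi
      rw [Finset.mem_filter, Finset.mem_finsuppAntidiag]
      refine ⟨⟨?_, ?_⟩, ?_⟩
      · rw [hsumL i]; exact hs
      · intro t ht
        rw [Finsupp.mem_support_iff] at ht
        rw [Finset.mem_range]
        by_contra hlt
        exact ht (hLzero i t hlt)
      · intro t ht
        rw [Finset.mem_range] at ht
        exact ⟨i ⟨t, ht⟩, hLval i ⟨t, ht⟩⟩
    · -- left inverse
      intro l hl
      rw [Finset.mem_filter] at hl
      obtain ⟨hl1, hl2⟩ := hl
      rw [Finset.mem_finsuppAntidiag] at hl1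
      ext t
      show (L fun j : Fin k => einv Fq N (l (j : ℕ))) t = l t
      by_cases ht : t < k
      · exact (hLval (fun j : Fin k => einv Fq N (l (j : ℕ))) ⟨t, ht⟩).trans
          (einv_spec Fq N _ (hl2 t (Finset.mem_range.2 ht)))
      · have h0 : l t = 0 := by
          by_contra hne
          have hmem : t ∈ l.support := Finsupp.mem_support_iff.2 hne
          have h3 := hl1.2 hmem
          rw [Finset.mem_range] at h3
          exact ht h3
        rw [h0]
        exact hLzero (fun j : Fin k => einv Fq N (l (j : ℕ))) t ht
    · -- right inverse
      intro i _
      funext j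
      show einv Fq N ((L i) (j : ℕ)) = i j
      rw [hLval i j, einv_e]
    · -- terms
      intro l hl
      rw [Finset.mem_filter] at hl
      obtain ⟨_, hl2⟩ := hl
      rw [Finset.prod_range (fun t => PowerSeries.coeff (l t) (bcSeries Fq N))]
      refine Finset.prod_congr rfl fun j _ => ?_
      have hsp := einv_spec Fq N _ (hl2 (j : ℕ) (Finset.mem_range.2 j.isLt))
      rw [← hsp, coeff_bc_e]
  have hprod : ∑ i ∈ T, ∏ j : Fin k, (carlitzD Fq N / carlitzD Fq (N + i j))
      = carlitzD Fq N ^ k * ∑ i ∈ T, ∏ j : Fin k, (carlitzD Fq (N + i j))⁻¹ := by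
    rw [Finset.mul_sum]
    refine Finset.sum_congr rfl fun i _ => ?_
    simp only [div_eq_mul_inv]
    rw [Finset.prod_mul_distrib, Finset.prod_const, Finset.card_univ, Fintype.card_fin]
  rw [hfin, PowerSeries.coeff_pow, hstep1, hbij, hprod, ← mul_assoc, ← mul_pow,
    inv_mul_cancel₀ (carlitzD_ne_zero Fq N), one_pow, one_mul]

/-- binomial-coefficient formula for the truncated Bernoulli–Carlitz
numbers. -/
theorem truncBC_explicit_binom (N n : ℕ) (hn : 1 ≤ n) :
    truncBC Fq N n =
      carlitzPi Fq n * ∑ k ∈ Finset.Icc 1 n,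
        ((n + 1).choose (k + 1) : RatFunc Fq) * (-carlitzD Fq N) ^ k *
          ∑ᶠ (i : Fin k → ℕ) (_ : ∑ j, rq Fq ^ (N + i j) = n + k * rq Fq ^ N),
            ∏ j, (carlitzD Fq (N + i j))⁻¹ := by
  rw [truncBC, coeff_inv_eq (RatFunc Fq) (bcSeries Fq N) (constantCoeff_bc Fq N) n hn]
  congr 1
  refine Finset.sum_congr rfl fun k hk => ?_
  rw [tuple_sum Fq N n k]
  have hD : carlitzD Fq N ≠ 0 := carlitzD_ne_zero Fq N
  have h1 : (-carlitzD Fq N)^k = (-1 : RatFunc Fq)^k * carlitzD Fq N ^ k := neg_pow _ _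
  have h3 : carlitzD Fq N ^ k * (carlitzD Fq N)⁻¹ ^ k = 1 := by
    rw [← mul_pow, mul_inv_cancel₀ hD, one_pow]
  rw [h1]
  linear_combination (-((-1 : RatFunc Fq)^k * ((n + 1).choose (k + 1) : RatFunc Fq) *
    PowerSeries.coeff n ((bcSeries Fq N)^k))) * h3

end
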